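/- For the PI closed-loop system ẋ = −BRBᵀ∇H(x) − B∇H_c(x_c) + Ed̄, ẋ_c = Bᵀ∇H(x), suppose x̄_c satisfies the matching condition Ed̄ = B∇H_c(x̄_c). Then the function V(x,x_c) = H(x) + H_c(x_c) − ∇H_c(x̄_c)ᵀ(x_c − x̄_c) − H_c(x̄_c) satisfies d/dt V = −∇H(x)ᵀBRBᵀ∇H(x) ≤ 0 along solutions. -/

import Mathlib

open Matrix

/-- The continuous linear map `v ↦ g ⬝ᵥ v`, used to express gradients of functions
on `ι → ℝ`. -/
noncomputable def dotCLM {ι : Type} [Fintype ι] (g : ι → ℝ) : (ι → ℝ) →L[ℝ] ℝ :=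
  LinearMap.toContinuousLinearMap
    (∑ i : ι, g i • (LinearMap.proj i : (ι → ℝ) →ₗ[ℝ] ℝ))

lemma dotCLM_apply {ι : Type} [Fintype ι] (g v : ι → ℝ) : dotCLM g v = g ⬝ᵥ v := by
  simp [dotCLM, dotProduct, LinearMap.sum_apply]

/-- for the PI closed loop `ẋ = −BRBᵀ∇H(x) − B∇H_c(x_c) + E d̄`,
`ẋ_c = Bᵀ∇H(x)`, if `x̄_c` satisfies the matching condition `E d̄ = B ∇H_c(x̄_c)`, then
`V(x,x_c) = H(x) + H_c(x_c) − ∇H_c(x̄_c)ᵀ(x_c − x̄_c) − H_c(x̄_c)` satisfies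
`d/dt V = −∇H(x)ᵀ B R Bᵀ ∇H(x) ≤ 0` along solutions. -/
theorem stmt_11 {V E K : Type} [Fintype V] [Fintype E] [Fintype K]
    [DecidableEq V] [DecidableEq E]
    (head tail : E → V)
    (B : Matrix V E ℝ)
    (hB : ∀ v e, B v e = (if head e = v then (1 : ℝ) else 0) - (if tail e = v then 1 else 0))
    (r : E → ℝ) (hr : ∀ i, 0 < r i)
    (F : Matrix V K ℝ)
    (hF : ∀ j : K, ∃ i : V, (F i j = 1 ∨ F i j = -1) ∧ ∀ i' : V, i' ≠ i → F i' j = 0)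
    (d : K → ℝ)
    (H : (V → ℝ) → ℝ) (gradH : (V → ℝ) → (V → ℝ))
    (hH : ∀ p, HasFDerivAt H (dotCLM (gradH p)) p)
    (Hc : (E → ℝ) → ℝ) (gradHc : (E → ℝ) → (E → ℝ))
    (hHc : ∀ p, HasFDerivAt Hc (dotCLM (gradHc p)) p)
    (xcbar : E → ℝ)
    (hmatch : F.mulVec d = B.mulVec (gradHc xcbar))
    (x : ℝ → V → ℝ) (xc : ℝ → E → ℝ)
    (hx : ∀ t, HasDerivAt x
      (-(B * Matrix.diagonal r * Bᵀ).mulVec (gradH (x t))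
        - B.mulVec (gradHc (xc t)) + F.mulVec d) t)
    (hxc : ∀ t, HasDerivAt xc (Bᵀ.mulVec (gradH (x t))) t) :
    ∀ t : ℝ,
      HasDerivAt
        (fun s => H (x s) + Hc (xc s) - gradHc xcbar ⬝ᵥ (xc s - xcbar) - Hc xcbar)
        (-(gradH (x t) ⬝ᵥ (B * Matrix.diagonal r * Bᵀ).mulVec (gradH (x t)))) t ∧
      -(gradH (x t) ⬝ᵥ (B * Matrix.diagonal r * Bᵀ).mulVec (gradH (x t))) ≤ 0 := by
  intro t
  set g := gradH (x t)
  set M := B * Matrix.diagonal r * Bᵀ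
  constructor
  · have h1 : HasDerivAt (fun s => H (x s))
        (g ⬝ᵥ (-M.mulVec g - B.mulVec (gradHc (xc t)) + F.mulVec d)) t := by
      have := (hH (x t)).comp_hasDerivAt t (hx t)
      rw [dotCLM_apply] at this; exact this
    have h2 : HasDerivAt (fun s => Hc (xc s))
        (gradHc (xc t) ⬝ᵥ Bᵀ.mulVec g) t := by
      have := (hHc (xc t)).comp_hasDerivAt t (hxc t)
      rw [dotCLM_apply] at this; exact this
    have h3 : HasDerivAt (fun s => gradHc xcbar ⬝ᵥ (xc s - xcbar))
        (gradHc xcbar ⬝ᵥ Bᵀ.mulVec g) t := by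
      have hsub : HasDerivAt (fun s => xc s - xcbar) (Bᵀ.mulVec g) t :=
        (hxc t).sub_const xcbar
      have := (dotCLM (gradHc xcbar)).hasFDerivAt.comp_hasDerivAt t hsub
      simpa only [Function.comp_def, dotCLM_apply] using this
    have h := ((h1.add h2).sub h3).sub_const (Hc xcbar)
    convert h using 1
    any_goals rfl
    have e1 : ∀ w : E → ℝ, w ⬝ᵥ Bᵀ.mulVec g = g ⬝ᵥ B.mulVec w := by
      intro w
      rw [Matrix.mulVec_transpose, Matrix.dotProduct_mulVec, dotProduct_comm]
    rw [hmatch, e1, e1]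
    simp [dotProduct_add, dotProduct_sub, dotProduct_neg]
    ring
  · have key : g ⬝ᵥ M.mulVec g =
        ∑ i, r i * (Bᵀ.mulVec g i)^2 := by
      have : M.mulVec g = B.mulVec ((Matrix.diagonal r).mulVec (Bᵀ.mulVec g)) := by
        simp [M, Matrix.mulVec_mulVec, Matrix.mul_assoc]
      rw [this, Matrix.dotProduct_mulVec, ← Matrix.mulVec_transpose]
      simp [dotProduct, Matrix.mulVec_diagonal, sq, mul_comm, mul_left_comm]
    have h0 : 0 ≤ g ⬝ᵥ M.mulVec g := by
      rw [key]
      exact Finset.sum_nonneg fun i _ => mul_nonneg (hr i).le (sq_nonneg _)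
    linarith
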